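/- A function f ∈ C(βℕ, B(H)) is a nonzero minimal idempotent if and only if there exist n ∈ ℕ and a rank-one idempotent P ∈ B(H) such that f takes the value P at the point of βℕ corresponding to n and the value 0 at every other point of βℕ. -/

import Mathlib

open Set

/-- Singletons at principal points of `βℕ` are clopen. -/
lemma isClopen_singleton_stoneCechUnit (n : ℕ) :
    IsClopen ({stoneCechUnit n} : Set (StoneCech ℕ)) := by
  have hc : Continuous (fun m : ℕ => decide (m = n)) := continuous_of_discreteTopology
  have hEc : Continuous (stoneCechExtend hc) := continuous_stoneCechExtend hc
  have hext : ∀ m : ℕ, stoneCechExtend hc (stoneCechUnit m) = decide (m = n) := fun m =>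
    congrFun (stoneCechExtend_extends hc) m
  have hV : IsClopen (stoneCechExtend hc ⁻¹' {true}) :=
    (isClopen_discrete {true}).preimage hEc
  have hVeq : stoneCechExtend hc ⁻¹' {true} = {stoneCechUnit n} := by
    apply Subset.antisymm
    · intro t ht
      by_contra hne
      have hopen : IsOpen (stoneCechExtend hc ⁻¹' {true} \ {stoneCechUnit n}) :=
        hV.2.sdiff isClosed_singleton
      obtain ⟨m, hm⟩ := denseRange_stoneCechUnit.exists_mem_open hopen ⟨t, ht, hne⟩
      have hdm : decide (m = n) = true := by rw [← hext m]; exact hm.1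
      have hmn : m = n := of_decide_eq_true hdm
      exact hm.2 (by rw [hmn]; rfl)
    · intro t ht
      rw [mem_singleton_iff] at ht
      subst ht
      simpa [mem_preimage] using hext n
  rw [← hVeq]; exact hV

theorem minimal_idempotent_in_continuous_stoneCech_iff
    {H : Type*} [NormedAddCommGroup H] [InnerProductSpace ℂ H] [CompleteSpace H]
    [TopologicalSpace.SeparableSpace H] (hinf : ¬ FiniteDimensional ℂ H)
    (f : C(StoneCech ℕ, H →L[ℂ] H)) :
    (f * f = f ∧ f ≠ 0 ∧
      ∀ g : C(StoneCech ℕ, H →L[ℂ] H), g * g = g → f * g = g → g * f = g → g = 0 ∨ g = f) ↔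
    ∃ (n : ℕ) (P : H →L[ℂ] H),
      P * P = P ∧ Module.finrank ℂ (LinearMap.range (P : H →ₗ[ℂ] H)) = 1 ∧
      f (stoneCechUnit n) = P ∧ ∀ t : StoneCech ℕ, t ≠ stoneCechUnit n → f t = 0 := by
  constructor
  · rintro ⟨hff, hf0, hmin⟩
    classical
    have hpt : ∀ t, f t * f t = f t := fun t => by
      have := DFunLike.congr_fun hff t
      simpa [ContinuousMap.mul_apply] using this
    -- find a principal point where f is nonzero
    have hopen : IsOpen {t : StoneCech ℕ | f t ≠ 0} := by
      have : IsClosed (f ⁻¹' {0}) := isClosed_singleton.preimage f.continuous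
      simpa [Set.preimage, Set.compl_setOf] using this.isOpen_compl
    have hne : {t : StoneCech ℕ | f t ≠ 0}.Nonempty := by
      by_contra h
      exact hf0 (ContinuousMap.ext fun t => by
        by_contra ht
        exact h ⟨t, ht⟩)
    obtain ⟨n, hn⟩ := denseRange_stoneCechUnit.exists_mem_open hopen hne
    set t₀ : StoneCech ℕ := stoneCechUnit n with ht₀
    have hcl : IsClopen ({t₀} : Set (StoneCech ℕ)) := isClopen_singleton_stoneCechUnit n
    have hfr : ∀ a ∈ frontier ({t₀} : Set (StoneCech ℕ)), True := fun _ _ => trivial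
    have hcont : ∀ (A : C(StoneCech ℕ, H →L[ℂ] H)),
        Continuous (({t₀} : Set (StoneCech ℕ)).piecewise A 0) := fun A =>
      Continuous.piecewise (fun a ha => absurd ha (by simp [hcl.frontier_eq]))
        A.continuous continuous_const
    -- first minimality application: f is supported on {t₀}
    have hvanish : ∀ t : StoneCech ℕ, t ≠ t₀ → f t = 0 := by
      set g₁ : C(StoneCech ℕ, H →L[ℂ] H) :=
        ⟨({t₀} : Set (StoneCech ℕ)).piecewise f 0, hcont f⟩ with hg₁
      have hg₁t : ∀ t, t ≠ t₀ → g₁ t = 0 := fun t ht => by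
        simp only [hg₁, ContinuousMap.coe_mk]
        rw [Set.piecewise_eq_of_notMem _ _ _ (by simpa using ht)]
        rfl
      have hg₁t₀ : g₁ t₀ = f t₀ := by
        simp only [hg₁, ContinuousMap.coe_mk]
        rw [Set.piecewise_eq_of_mem _ _ _ (mem_singleton t₀)]
      have h1 : g₁ * g₁ = g₁ := ContinuousMap.ext fun t => by
        by_cases ht : t = t₀
        · subst ht; simp [ContinuousMap.mul_apply, hg₁t₀, hpt]
        · simp [ContinuousMap.mul_apply, hg₁t t ht]
      have h2 : f * g₁ = g₁ := ContinuousMap.ext fun t => by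
        by_cases ht : t = t₀
        · subst ht; simp [ContinuousMap.mul_apply, hg₁t₀, hpt]
        · simp [ContinuousMap.mul_apply, hg₁t t ht]
      have h3 : g₁ * f = g₁ := ContinuousMap.ext fun t => by
        by_cases ht : t = t₀
        · subst ht; simp [ContinuousMap.mul_apply, hg₁t₀, hpt]
        · simp [ContinuousMap.mul_apply, hg₁t t ht]
      rcases hmin g₁ h1 h2 h3 with h | h
      · exact absurd (by rw [← hg₁t₀, h]; rfl) hn
      · intro t ht
        rw [← h, hg₁t t ht]
    -- P := f t₀ is an idempotent; construct a rank-one subidempotent Q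
    have hP : f t₀ * f t₀ = f t₀ := hpt t₀
    obtain ⟨x₀, hx₀⟩ : ∃ y, f t₀ y ≠ 0 := by
      by_contra h
      push_neg at h
      exact hn (ContinuousLinearMap.ext fun y => by simpa using h y)
    set x : H := f t₀ x₀ with hx
    have hPx : f t₀ x = x := by
      have := DFunLike.congr_fun hP x₀
      simpa [ContinuousLinearMap.mul_apply] using this
    have hxne : x ≠ 0 := hx₀
    have hc : (inner ℂ x x : ℂ) ≠ 0 := inner_self_ne_zero.mpr hxne
    set φ : H →L[ℂ] ℂ := (inner ℂ x x : ℂ)⁻¹ • ((innerSL ℂ x).comp (f t₀)) with hφ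
    set Q : H →L[ℂ] H := φ.smulRight x with hQdef
    have hφapp : ∀ y, φ y = (inner ℂ x x : ℂ)⁻¹ * inner ℂ x (f t₀ y) := fun y => by
      simp [hφ]
    have hQapp : ∀ y, Q y = φ y • x := fun y => by simp [hQdef]
    have hQx : Q x = x := by
      rw [hQapp x, hφapp x, hPx, inv_mul_cancel₀ hc, one_smul]
    have hQne : Q ≠ 0 := fun h => hxne (by rw [← hQx, h]; simp)
    have hPQ : f t₀ * Q = Q := ContinuousLinearMap.ext fun y => by
      rw [ContinuousLinearMap.mul_apply, hQapp y, map_smul, hPx]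
    have hQP : Q * f t₀ = Q := ContinuousLinearMap.ext fun y => by
      have hPy : f t₀ (f t₀ y) = f t₀ y := by
        have := DFunLike.congr_fun hP y
        simpa [ContinuousLinearMap.mul_apply] using this
      rw [ContinuousLinearMap.mul_apply, hQapp (f t₀ y), hQapp y, hφapp (f t₀ y), hφapp y, hPy]
    have hQQ : Q * Q = Q := ContinuousLinearMap.ext fun y => by
      rw [ContinuousLinearMap.mul_apply, hQapp y, map_smul, hQx]
    -- second minimality application: f t₀ = Q
    set g₂ : C(StoneCech ℕ, H →L[ℂ] H) :=
      ⟨({t₀} : Set (StoneCech ℕ)).piecewise (ContinuousMap.const _ Q) 0,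
        hcont (ContinuousMap.const _ Q)⟩ with hg₂
    have hg₂t : ∀ t, t ≠ t₀ → g₂ t = 0 := fun t ht => by
      simp only [hg₂, ContinuousMap.coe_mk]
      rw [Set.piecewise_eq_of_notMem _ _ _ (by simpa using ht)]
      rfl
    have hg₂t₀ : g₂ t₀ = Q := by
      simp only [hg₂, ContinuousMap.coe_mk]
      rw [Set.piecewise_eq_of_mem _ _ _ (mem_singleton t₀)]
      rfl
    have h1 : g₂ * g₂ = g₂ := ContinuousMap.ext fun t => by
      by_cases ht : t = t₀
      · subst ht; simp [ContinuousMap.mul_apply, hg₂t₀, hQQ]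
      · simp [ContinuousMap.mul_apply, hg₂t t ht]
    have h2 : f * g₂ = g₂ := ContinuousMap.ext fun t => by
      by_cases ht : t = t₀
      · subst ht; simp [ContinuousMap.mul_apply, hg₂t₀, hPQ]
      · simp [ContinuousMap.mul_apply, hg₂t t ht]
    have h3 : g₂ * f = g₂ := ContinuousMap.ext fun t => by
      by_cases ht : t = t₀
      · subst ht; simp [ContinuousMap.mul_apply, hg₂t₀, hQP]
      · simp [ContinuousMap.mul_apply, hg₂t t ht]
    have hfQ : f t₀ = Q := by
      rcases hmin g₂ h1 h2 h3 with h | h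
      · exact absurd (by rw [← hg₂t₀, h]; rfl) hQne
      · rw [← h, hg₂t₀]
    -- rank computation
    have hrange : LinearMap.range ((f t₀ : H →L[ℂ] H) : H →ₗ[ℂ] H) = ℂ ∙ x := by
      rw [hfQ]
      apply le_antisymm
      · rintro _ ⟨y, rfl⟩
        simp only [ContinuousLinearMap.coe_coe, hQapp]
        exact Submodule.smul_mem _ _ (Submodule.mem_span_singleton_self x)
      · rw [Submodule.span_le, Set.singleton_subset_iff]
        exact ⟨x, by simpa using hQx⟩
    exact ⟨n, f t₀, hP, by rw [hrange]; exact finrank_span_singleton hxne, rfl, hvanish⟩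
  · rintro ⟨n, P, hP, hrank, hfn, hf0⟩
    have hPne : P ≠ 0 := by
      rintro rfl
      rw [ContinuousLinearMap.coe_zero, LinearMap.range_zero, finrank_bot] at hrank
      exact absurd hrank (by simp)
    refine ⟨?_, ?_, ?_⟩
    · exact ContinuousMap.ext fun t => by
        by_cases ht : t = stoneCechUnit n
        · subst ht; simp [ContinuousMap.mul_apply, hfn, hP]
        · simp [ContinuousMap.mul_apply, hf0 t ht]
    · intro h
      exact hPne (by rw [← hfn, h]; rfl)
    · intro g hgg hfg hgf
      have hgt : ∀ t, t ≠ stoneCechUnit n → g t = 0 := fun t ht => by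
        have := DFunLike.congr_fun hfg t
        rw [ContinuousMap.mul_apply, hf0 t ht, zero_mul] at this
        exact this.symm
      set Q : H →L[ℂ] H := g (stoneCechUnit n) with hQdef
      have hQQ : Q * Q = Q := by
        have := DFunLike.congr_fun hgg (stoneCechUnit n)
        simpa [ContinuousMap.mul_apply] using this
      have hPQ : P * Q = Q := by
        have := DFunLike.congr_fun hfg (stoneCechUnit n)
        simpa [ContinuousMap.mul_apply, hfn] using this
      have hQP : Q * P = Q := by
        have := DFunLike.congr_fun hgf (stoneCechUnit n)
        simpa [ContinuousMap.mul_apply, hfn] using this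
      by_cases hQ : Q = 0
      · left
        exact ContinuousMap.ext fun t => by
          by_cases ht : t = stoneCechUnit n
          · subst ht; simpa using hQ
          · simpa using hgt t ht
      · right
        -- Q is a nonzero subidempotent of the rank-one idempotent P, so Q = P
        haveI : FiniteDimensional ℂ (LinearMap.range (P : H →ₗ[ℂ] H)) :=
          FiniteDimensional.of_finrank_pos (by rw [hrank]; norm_num)
        have hle : LinearMap.range ((Q : H →L[ℂ] H) : H →ₗ[ℂ] H) ≤
            LinearMap.range ((P : H →L[ℂ] H) : H →ₗ[ℂ] H) := by
          rintro _ ⟨y, rfl⟩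
          refine ⟨Q y, ?_⟩
          have := DFunLike.congr_fun hPQ y
          simpa [ContinuousLinearMap.mul_apply] using this
        have hQbot : LinearMap.range ((Q : H →L[ℂ] H) : H →ₗ[ℂ] H) ≠ ⊥ := by
          intro h
          apply hQ
          apply ContinuousLinearMap.ext fun y => ?_
          have : (Q : H →ₗ[ℂ] H) y ∈ (⊥ : Submodule ℂ H) := h ▸ LinearMap.mem_range_self _ y
          simpa using this
        haveI : FiniteDimensional ℂ (LinearMap.range ((Q : H →L[ℂ] H) : H →ₗ[ℂ] H)) :=
          Submodule.finiteDimensional_of_le hle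
        have hpos : 0 < Module.finrank ℂ (LinearMap.range ((Q : H →L[ℂ] H) : H →ₗ[ℂ] H)) := by
          rw [Module.finrank_pos_iff]
          exact Submodule.nontrivial_iff_ne_bot.mpr hQbot
        have heq : LinearMap.range ((Q : H →L[ℂ] H) : H →ₗ[ℂ] H) =
            LinearMap.range ((P : H →L[ℂ] H) : H →ₗ[ℂ] H) :=
          Submodule.eq_of_le_of_finrank_le hle (by omega)
        have hQPeq : Q = P := by
          apply ContinuousLinearMap.ext fun y => ?_
          have hmem : P y ∈ LinearMap.range ((Q : H →L[ℂ] H) : H →ₗ[ℂ] H) := by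
            rw [heq]; exact ⟨y, rfl⟩
          obtain ⟨z, hz⟩ := hmem
          have hQPy : Q (P y) = P y := by
            have h1 : Q (Q z) = Q z := by
              have := DFunLike.congr_fun hQQ z
              simpa [ContinuousLinearMap.mul_apply] using this
            simp only [ContinuousLinearMap.coe_coe] at hz
            rw [← hz, h1]
          have := DFunLike.congr_fun hQP y
          rw [ContinuousLinearMap.mul_apply, hQPy] at this
          exact this.symm
        exact ContinuousMap.ext fun t => by
          by_cases ht : t = stoneCechUnit n
          · subst ht; rw [← hQdef, hQPeq, hfn]
          · rw [hgt t ht, hf0 t ht]
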